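/- If 2 ≤ α ≤ β < s(σ) and n ≥ (β-α+1)⌊(s(σ)-1)/(α-1)⌋ + s(σ), then H(n,r,q|σ) has no (α,β)-colouring in which all classes are monochromatic. -/

import Mathlib

open Finset

/-- `K` is an edge of the σ-hypergraph `H(n,r,q | σ)`: the multiset of non-zero
cardinalities of the intersections of `K` with the `n` classes equals `σ`. -/
def sigmaEdge (n q : ℕ) (σ : Multiset ℕ) (K : Finset (Fin n × Fin q)) : Prop :=
  (((Finset.univ : Finset (Fin n)).val.map
      fun i => (K.filter fun v => v.1 = i).card).filter fun m => m ≠ 0) = σ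

/-- `c` is an `(α,β)`-colouring: every edge contains at least `α` and at most `β` colours. -/
def isABColouring (n q : ℕ) (σ : Multiset ℕ) (α β : ℕ) (c : Fin n × Fin q → ℕ) : Prop :=
  ∀ K : Finset (Fin n × Fin q), sigmaEdge n q σ K →
    α ≤ (K.image c).card ∧ (K.image c).card ≤ β

/-- `c` uses exactly `k` colours. -/
def usesExactly (n q k : ℕ) (c : Fin n × Fin q → ℕ) : Prop :=
  ((Finset.univ : Finset (Fin n × Fin q)).image c).card = k

/-- every class of the σ-hypergraph is monochromatic under `c`. -/
def classesMonochromatic (n q : ℕ) (c : Fin n × Fin q → ℕ) : Prop :=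
  ∀ v w : Fin n × Fin q, v.1 = w.1 → c v = c w

/-- `σ` is a partition of `r` (a multiset of positive integers summing to `r`). -/
def IsPartitionOf (σ : Multiset ℕ) (r : ℕ) : Prop := σ.sum = r ∧ 0 ∉ σ


lemma exists_map_eq {γ : Type*} [DecidableEq γ] (S : Finset γ) :
    ∀ msig : Multiset ℕ, S.card = Multiset.card msig →
    ∃ g : γ → ℕ, S.val.map g = msig ∧ ∀ i ∉ S, g i = 0 := by
  induction S using Finset.cons_induction with
  | empty =>
    intro m h
    simp only [Finset.card_empty] at h
    refine ⟨fun _ => 0, ?_, fun _ _ => rfl⟩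
    simp [(Multiset.card_eq_zero.mp h.symm)]
  | cons a S' ha ih =>
    intro m h
    rw [Finset.card_cons] at h
    have hm : m ≠ 0 := by
      intro h0; rw [h0] at h; simp at h
    obtain ⟨x, hx⟩ := Multiset.exists_mem_of_ne_zero hm
    have hcard : Multiset.card (m.erase x) = Multiset.card m - 1 :=
      Multiset.card_erase_of_mem hx
    obtain ⟨g', hg', hg'0⟩ := ih (m.erase x) (by omega)
    refine ⟨fun i => if i = a then x else g' i, ?_, ?_⟩
    · rw [Finset.cons_val, Multiset.map_cons]
      have heq : S'.val.map (fun i => if i = a then x else g' i) = S'.val.map g' := by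
        apply Multiset.map_congr rfl
        intro i hi
        have : i ≠ a := by rintro rfl; exact ha hi
        simp [this]
      rw [heq, hg']
      simp only [if_pos rfl]
      exact Multiset.cons_erase hx
    · intro i hi
      rw [Finset.mem_cons, not_or] at hi
      simp [hi.1, hg'0 i hi.2]

lemma card_filter_fin_lt (q k : ℕ) (h : k ≤ q) :
    (univ.filter fun j : Fin q => (j:ℕ) < k).card = k := by
  have him : ((univ.filter fun j : Fin q => (j:ℕ) < k).image Fin.val) = Finset.range k := by
    ext m
    simp only [mem_image, mem_filter, mem_univ, true_and, Finset.mem_range]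
    constructor
    · rintro ⟨j, hj, rfl⟩; exact hj
    · intro hm; exact ⟨⟨m, lt_of_lt_of_le hm h⟩, hm, rfl⟩
  have h2 := Finset.card_image_of_injective (univ.filter fun j : Fin q => (j:ℕ) < k) Fin.val_injective
  rw [him, Finset.card_range] at h2
  omega

lemma exists_sec {n : ℕ} (f : Fin n → ℕ) :
    ∀ U : Finset ℕ, U ⊆ univ.image f → ∃ R : Finset (Fin n), R.image f = U ∧ R.card = U.card := by
  intro U
  induction U using Finset.induction_on with
  | empty => intro _; exact ⟨∅, by simp, by simp⟩
  | @insert w U' hw ih =>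
    intro hsub
    obtain ⟨R', hR'img, hR'card⟩ := ih (fun x hx => hsub (Finset.mem_insert_of_mem hx))
    have hw' : w ∈ univ.image f := hsub (Finset.mem_insert_self _ _)
    obtain ⟨i, _, hi⟩ := Finset.mem_image.mp hw'
    have hiR' : i ∉ R' := by
      intro hmem
      have : f i ∈ U' := hR'img ▸ Finset.mem_image_of_mem f hmem
      rw [hi] at this
      exact hw this
    refine ⟨insert i R', ?_, ?_⟩
    · rw [Finset.image_insert, hi, hR'img]
    · rw [Finset.card_insert_of_notMem hiR', hR'card, Finset.card_insert_of_notMem hw]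

lemma comb (n s α β : ℕ) (f : Fin n → ℕ) (hα : 2 ≤ α) (hαβ : α ≤ β) (hβs : β < s)
    (hn : (β - α + 1) * ((s - 1) / (α - 1)) + s ≤ n)
    (H : ∀ S : Finset (Fin n), S.card = s → α ≤ (S.image f).card ∧ (S.image f).card ≤ β) :
    False := by
  set m := (s - 1) / (α - 1) with hm
  have hsn : s ≤ n := le_trans (Nat.le_add_left _ _) hn
  have hcardn : (univ : Finset (Fin n)).card = n := by simp
  set T := (univ : Finset (Fin n)).image f with hT
  -- step 3: any α-1 colours cover at most s-1 vertices
  have step3 : ∀ W : Finset ℕ, W.card = α - 1 →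
      (univ.filter fun i => f i ∈ W).card ≤ s - 1 := by
    intro W hW
    by_contra hc
    push_neg at hc
    have hsle : s ≤ (univ.filter fun i => f i ∈ W).card := by omega
    obtain ⟨S, hS, hScard⟩ := Finset.exists_subset_card_eq (s := (univ.filter fun i => f i ∈ W)) (n := s) hsle
    have h1 := (H S hScard).1
    have hsubW : S.image f ⊆ W := by
      intro x hx
      obtain ⟨i, hiS, rfl⟩ := Finset.mem_image.mp hx
      exact (Finset.mem_filter.mp (hS hiS)).2
    have := Finset.card_le_card hsubW
    omega
  -- fiber decomposition helper
  have fiber_eq : ∀ (W : Finset ℕ) (w : ℕ), w ∈ W →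
      ((univ.filter fun i : Fin n => f i ∈ W).filter fun i => f i = w)
        = univ.filter fun i => f i = w := by
    intro W w hw
    ext i
    simp only [mem_filter, mem_univ, true_and]
    constructor
    · rintro ⟨_, h⟩; exact h
    · rintro rfl; exact ⟨hw, rfl⟩
  have sum_fibers : ∀ W : Finset ℕ,
      (univ.filter fun i : Fin n => f i ∈ W).card
        = ∑ w ∈ W, (univ.filter fun i => f i = w).card := by
    intro W
    rw [Finset.card_eq_sum_card_fiberwise (f := f) (s := univ.filter fun i : Fin n => f i ∈ W) (t := W) (fun i hi => (Finset.mem_filter.mp hi).2)]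
    exact Finset.sum_congr rfl fun w hw => by rw [fiber_eq W w hw]
  -- t ≥ α
  obtain ⟨S0, hS0sub, hS0card⟩ := Finset.exists_subset_card_eq (s := (univ : Finset (Fin n))) (n := s) (by simp; omega)
  have htα : α ≤ T.card := by
    have := (H S0 hS0card).1
    have hsub : S0.image f ⊆ T := Finset.image_subset_image (Finset.subset_univ _)
    have := Finset.card_le_card hsub
    omega
  -- t ≤ β
  have htβ : T.card ≤ β := by
    by_contra hc
    push_neg at hc
    obtain ⟨U, hUsub, hUcard⟩ := Finset.exists_subset_card_eq (s := T) (n := β + 1) (by omega)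
    obtain ⟨R, hRimg, hRcard⟩ := exists_sec f U hUsub
    have hRs : R.card ≤ s := by omega
    obtain ⟨S, hRS, _, hScard⟩ :=
      Finset.exists_subsuperset_card_eq (Finset.subset_univ R) hRs (by omega)
    have h2 := (H S hScard).2
    have : U ⊆ S.image f := hRimg ▸ Finset.image_subset_image hRS
    have := Finset.card_le_card this
    omega
  -- m ≥ 1 : since s - 1 ≥ α - 1
  have hm1 : 1 ≤ m := by
    rw [hm]
    exact Nat.one_le_div_iff (by omega) |>.mpr (by omega)
  -- B: the big colours
  set B := T.filter (fun w => m + 1 ≤ (univ.filter fun i => f i = w).card) with hB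
  have hBcard : B.card ≤ α - 2 := by
    by_contra hc
    push_neg at hc
    have : α - 1 ≤ B.card := by omega
    obtain ⟨W, hWB, hWcard⟩ := Finset.exists_subset_card_eq (s := B) (n := α - 1) this
    have hge : (α - 1) * (m + 1) ≤ (univ.filter fun i : Fin n => f i ∈ W).card := by
      rw [sum_fibers W]
      calc (α - 1) * (m + 1) = ∑ _w ∈ W, (m + 1) := by rw [Finset.sum_const, hWcard]; ring
        _ ≤ _ := Finset.sum_le_sum fun w hw => (Finset.mem_filter.mp (hWB hw)).2
    have hlt : s - 1 < (α - 1) * (m + 1) := by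
      have h0 : 0 < α - 1 := by omega
      have hd : (s - 1) / (α - 1) < m + 1 := by omega
      have := (Nat.div_lt_iff_lt_mul h0).mp hd
      calc s - 1 < (m + 1) * (α - 1) := this
        _ = (α - 1) * (m + 1) := Nat.mul_comm _ _
    have := step3 W hWcard
    omega
  -- extend B to W ⊆ T of card α-1
  obtain ⟨W, hBW, hWT, hWcard⟩ :=
    Finset.exists_subsuperset_card_eq (Finset.filter_subset _ T) (show B.card ≤ α - 1 by omega)
      (by omega)
  -- count
  have hsplit := Finset.card_filter_add_card_filter_not
    (s := (univ : Finset (Fin n))) (p := fun i => f i ∈ W)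
  have h1 : (univ.filter fun i : Fin n => f i ∈ W).card ≤ s - 1 := step3 W hWcard
  have h2 : (univ.filter fun i : Fin n => f i ∉ W).card ≤ (β - α + 1) * m := by
    have hdecomp : (univ.filter fun i : Fin n => f i ∉ W).card
        = ∑ w ∈ T \ W, ((univ.filter fun i : Fin n => f i ∉ W).filter fun i => f i = w).card := by
      apply Finset.card_eq_sum_card_fiberwise (f := f)
      intro i hi
      rw [Finset.mem_coe, Finset.mem_sdiff]
      exact ⟨Finset.mem_image_of_mem f (mem_univ i), (Finset.mem_filter.mp hi).2⟩
    have hfib : ∀ w ∈ T \ W,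
        ((univ.filter fun i : Fin n => f i ∉ W).filter fun i => f i = w).card ≤ m := by
      intro w hw
      rw [Finset.mem_sdiff] at hw
      have heq : ((univ.filter fun i : Fin n => f i ∉ W).filter fun i => f i = w)
          = univ.filter fun i => f i = w := by
        ext i
        simp only [mem_filter, mem_univ, true_and]
        constructor
        · rintro ⟨_, h⟩; exact h
        · rintro rfl; exact ⟨hw.2, rfl⟩
      rw [heq]
      by_contra hc
      push_neg at hc
      have : w ∈ B := Finset.mem_filter.mpr ⟨hw.1, by omega⟩
      exact hw.2 (hBW this)
    calc (univ.filter fun i : Fin n => f i ∉ W).card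
        = ∑ w ∈ T \ W, ((univ.filter fun i : Fin n => f i ∉ W).filter fun i => f i = w).card :=
          hdecomp
      _ ≤ ∑ _w ∈ T \ W, m := Finset.sum_le_sum hfib
      _ = (T \ W).card * m := by rw [Finset.sum_const, smul_eq_mul]
      _ ≤ (β - α + 1) * m := by
          apply Nat.mul_le_mul_right
          rw [Finset.card_sdiff_of_subset hWT]
          omega
  rw [hcardn] at hsplit
  have key : n ≤ (s - 1) + (β - α + 1) * m := by omega
  omega

theorem stmt9 (n r q α β Δ : ℕ) (σ : Multiset ℕ)
    (hpart : IsPartitionOf σ r)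
    (hΔmem : Δ ∈ σ) (hΔmax : ∀ x ∈ σ, x ≤ Δ)
    (hα : 2 ≤ α) (hαβ : α ≤ β) (hβs : β < σ.card)
    (hq : Δ ≤ q)
    (hn : (β - α + 1) * ((σ.card - 1) / (α - 1)) + σ.card ≤ n) :
    ∀ c : Fin n × Fin q → ℕ, classesMonochromatic n q c →
      ¬ isABColouring n q σ α β c := by
  intro c hmono hcol
  have hq0 : 0 < q := by
    have : Δ ≠ 0 := fun h => hpart.2 (h ▸ hΔmem)
    omega
  set f : Fin n → ℕ := fun i => c (i, ⟨0, hq0⟩) with hf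
  have hcf : ∀ v : Fin n × Fin q, c v = f v.1 := fun v => hmono v (v.1, ⟨0, hq0⟩) rfl
  apply comb n σ.card α β f hα hαβ hβs hn
  intro S hScard
  obtain ⟨g, hgmap, hg0⟩ := exists_map_eq S σ hScard
  have hgmem : ∀ i ∈ S, g i ∈ σ := by
    intro i hi
    rw [← hgmap]
    exact Multiset.mem_map_of_mem g hi
  have hgq : ∀ i, g i ≤ q := by
    intro i
    by_cases hi : i ∈ S
    · exact le_trans (hΔmax _ (hgmem i hi)) hq
    · rw [hg0 i hi]; omega
  have hgpos : ∀ i ∈ S, 0 < g i := by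
    intro i hi
    have := hgmem i hi
    have : g i ≠ 0 := fun h => hpart.2 (h ▸ this)
    omega
  have hgS : ∀ i, g i ≠ 0 ↔ i ∈ S := by
    intro i
    constructor
    · intro h; by_contra hi; exact h (hg0 i hi)
    · intro hi; have := hgpos i hi; omega
  set K : Finset (Fin n × Fin q) := univ.filter fun v => (v.2 : ℕ) < g v.1 with hK
  have hfiber : ∀ i : Fin n, (K.filter fun v => v.1 = i).card = g i := by
    intro i
    have hKi : (K.filter fun v => v.1 = i)
        = ({i} : Finset (Fin n)) ×ˢ (univ.filter fun j : Fin q => (j:ℕ) < g i) := by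
      ext v
      simp only [hK, Finset.mem_filter, Finset.mem_product, Finset.mem_singleton, mem_univ,
        true_and]
      constructor
      · rintro ⟨hv, rfl⟩; exact ⟨rfl, hv⟩
      · rintro ⟨h1, h2⟩; rw [h1]; exact ⟨h2, rfl⟩
    rw [hKi, Finset.card_product, Finset.card_singleton, one_mul,
      card_filter_fin_lt q (g i) (hgq i)]
  have hedge : sigmaEdge n q σ K := by
    unfold sigmaEdge
    have hmapeq : ((Finset.univ : Finset (Fin n)).val.map
        fun i => (K.filter fun v => v.1 = i).card) = (Finset.univ : Finset (Fin n)).val.map g :=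
      Multiset.map_congr rfl fun i _ => hfiber i
    rw [hmapeq, Multiset.filter_map]
    have : Multiset.filter ((fun m => m ≠ 0) ∘ g) (Finset.univ : Finset (Fin n)).val
        = S.val := by
      have : Finset.filter (fun i => g i ≠ 0) (univ : Finset (Fin n)) = S := by
        ext i
        simp only [Finset.mem_filter, mem_univ, true_and]
        exact hgS i
      calc Multiset.filter ((fun m => m ≠ 0) ∘ g) (Finset.univ : Finset (Fin n)).val
          = (Finset.filter (fun i => g i ≠ 0) (univ : Finset (Fin n))).val := by
            rw [Finset.filter_val]; rfl
        _ = S.val := by rw [this]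
    rw [this, hgmap]
  have hKfst : K.image Prod.fst = S := by
    ext i
    simp only [Finset.mem_image, hK, Finset.mem_filter, mem_univ, true_and]
    constructor
    · rintro ⟨v, hv, rfl⟩
      rw [← hgS v.1]
      omega
    · intro hi
      exact ⟨(i, ⟨0, hq0⟩), hgpos i hi, rfl⟩
  have hKimg : K.image c = S.image f := by
    have h1 : K.image c = K.image (f ∘ Prod.fst) :=
      Finset.image_congr fun v _ => hcf v
    rw [h1, ← Finset.image_image, hKfst]
  have := hcol K hedge
  rw [hKimg] at this
  exact this
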